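/- Let n ≥ 2 be an integer, λ > 0 a real number, and 1 ≤ q < p ≤ n integers, and define D̃_{ij} := cosh((min(i,j) − 1/2)λ)·cosh((n − max(i,j) + 1/2)λ). Then: (a) for every integer 1 ≤ j ≤ q, D̃_{jp} − D̃_{jq} = cosh((j − 1/2)λ)·(cosh((n − p + 1/2)λ) − cosh((n − q + 1/2)λ)) < 0, and j ↦ D̃_{jp} − D̃_{jq} is strictly decreasing on 1 ≤ j ≤ q; (b) for every integer p ≤ j ≤ n, D̃_{jp} − D̃_{jq} = cosh((n − j + 1/2)λ)·(cosh((p − 1/2)λ) − cosh((q − 1/2)λ)) > 0, and j ↦ D̃_{jp} − D̃_{jq} is strictly decreasing on p ≤ j ≤ n. -/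
import Mathlib


open Real Matrix Finset

noncomputable section

/-- Real inverse hyperbolic cosine. -/
def arcosh (x : ℝ) : ℝ := Real.log (x + Real.sqrt (x ^ 2 - 1))

/-- `D̃ᵢⱼ = cosh((min(i,j) − 1/2)λ)·cosh((n − max(i,j) + 1/2)λ)`. -/
def Dtil (n : ℕ) (l : ℝ) (i j : ℕ) : ℝ :=
  Real.cosh (((min i j : ℕ) - (1 : ℝ) / 2) * l) *
    Real.cosh (((n : ℝ) - (max i j : ℕ) + 1 / 2) * l)


private lemma cosh_lt_cosh_of_nonneg {a b : ℝ} (ha : 0 ≤ a) (hab : a < b) :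
    Real.cosh a < Real.cosh b := by
  rw [Real.cosh_lt_cosh, abs_of_nonneg ha, abs_of_nonneg (ha.trans hab.le)]
  exact hab

/-- The exception-induced rank perturbation direction `D̃ⱼₚ − D̃ⱼq`: its closed
form, sign, and strict monotonicity on each transitive section. -/
theorem Dtil_difference_properties
    (n : ℕ) (hn : 2 ≤ n) (l : ℝ) (hl : 0 < l) (p q : ℕ)
    (hq : 1 ≤ q) (hqp : q < p) (hpn : p ≤ n) :
    (∀ j : ℕ, 1 ≤ j → j ≤ q →
      Dtil n l j p - Dtil n l j q =
        Real.cosh (((j : ℝ) - 1 / 2) * l) *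
          (Real.cosh (((n : ℝ) - (p : ℝ) + 1 / 2) * l) -
            Real.cosh (((n : ℝ) - (q : ℝ) + 1 / 2) * l)) ∧
      Dtil n l j p - Dtil n l j q < 0) ∧
    (∀ j j' : ℕ, 1 ≤ j → j < j' → j' ≤ q →
      Dtil n l j' p - Dtil n l j' q < Dtil n l j p - Dtil n l j q) ∧
    (∀ j : ℕ, p ≤ j → j ≤ n →
      Dtil n l j p - Dtil n l j q =
        Real.cosh (((n : ℝ) - (j : ℝ) + 1 / 2) * l) *
          (Real.cosh (((p : ℝ) - 1 / 2) * l) -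
            Real.cosh (((q : ℝ) - 1 / 2) * l)) ∧
      0 < Dtil n l j p - Dtil n l j q) ∧
    (∀ j j' : ℕ, p ≤ j → j < j' → j' ≤ n →
      Dtil n l j' p - Dtil n l j' q < Dtil n l j p - Dtil n l j q) := by
  have hpnR : (p : ℝ) ≤ n := by exact_mod_cast hpn
  have hqpR : (q : ℝ) < p := by exact_mod_cast hqp
  have hqR : (1 : ℝ) ≤ q := by exact_mod_cast hq
  -- closed form on section (a)
  have forma : ∀ j : ℕ, 1 ≤ j → j ≤ q →
      Dtil n l j p - Dtil n l j q =
        Real.cosh (((j : ℝ) - 1 / 2) * l) *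
          (Real.cosh (((n : ℝ) - (p : ℝ) + 1 / 2) * l) -
            Real.cosh (((n : ℝ) - (q : ℝ) + 1 / 2) * l)) := by
    intro j h1 h2
    have hjp : j ≤ p := le_of_lt (lt_of_le_of_lt h2 hqp)
    unfold Dtil
    rw [min_eq_left hjp, max_eq_right hjp, min_eq_left h2, max_eq_right h2]
    ring
  -- the negative constant factor on section (a)
  have hC : Real.cosh (((n : ℝ) - (p : ℝ) + 1 / 2) * l) -
      Real.cosh (((n : ℝ) - (q : ℝ) + 1 / 2) * l) < 0 := by
    have h1 : (0 : ℝ) ≤ ((n : ℝ) - p + 1 / 2) * l := by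
      apply mul_nonneg _ hl.le; linarith
    have h2 : ((n : ℝ) - p + 1 / 2) * l < ((n : ℝ) - q + 1 / 2) * l := by
      apply mul_lt_mul_of_pos_right _ hl; linarith
    have := cosh_lt_cosh_of_nonneg h1 h2
    linarith
  -- the positive constant factor on section (b)
  have hC' : 0 < Real.cosh (((p : ℝ) - 1 / 2) * l) -
      Real.cosh (((q : ℝ) - 1 / 2) * l) := by
    have h1 : (0 : ℝ) ≤ ((q : ℝ) - 1 / 2) * l := by
      apply mul_nonneg _ hl.le; linarith
    have h2 : ((q : ℝ) - 1 / 2) * l < ((p : ℝ) - 1 / 2) * l := by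
      apply mul_lt_mul_of_pos_right _ hl; linarith
    have := cosh_lt_cosh_of_nonneg h1 h2
    linarith
  have formb : ∀ j : ℕ, p ≤ j → j ≤ n →
      Dtil n l j p - Dtil n l j q =
        Real.cosh (((n : ℝ) - (j : ℝ) + 1 / 2) * l) *
          (Real.cosh (((p : ℝ) - 1 / 2) * l) -
            Real.cosh (((q : ℝ) - 1 / 2) * l)) := by
    intro j h1 h2
    have hqj : q ≤ j := le_trans hqp.le h1
    unfold Dtil
    rw [min_eq_right h1, max_eq_left h1, min_eq_right hqj, max_eq_left hqj]
    ring
  refine ⟨?_, ?_, ?_, ?_⟩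
  · intro j h1 h2
    refine ⟨forma j h1 h2, ?_⟩
    rw [forma j h1 h2]
    exact mul_neg_of_pos_of_neg (Real.cosh_pos _) hC
  · intro j j' h1 h2 h3
    rw [forma j h1 (le_of_lt (lt_of_lt_of_le h2 h3)), forma j' (le_trans h1 h2.le) h3]
    apply mul_lt_mul_of_neg_right _ hC
    have h1R : (1 : ℝ) ≤ j := by exact_mod_cast h1
    have h2R : (j : ℝ) < j' := by exact_mod_cast h2
    have ha : (0 : ℝ) ≤ ((j : ℝ) - 1 / 2) * l := by
      apply mul_nonneg _ hl.le; linarith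
    have hb : ((j : ℝ) - 1 / 2) * l < ((j' : ℝ) - 1 / 2) * l := by
      apply mul_lt_mul_of_pos_right _ hl; linarith
    exact cosh_lt_cosh_of_nonneg ha hb
  · intro j h1 h2
    refine ⟨formb j h1 h2, ?_⟩
    rw [formb j h1 h2]
    exact mul_pos (Real.cosh_pos _) hC'
  · intro j j' h1 h2 h3
    rw [formb j h1 (le_of_lt (lt_of_lt_of_le h2 h3)), formb j' (le_trans h1 h2.le) h3]
    apply mul_lt_mul_of_pos_right _ hC'
    have h2R : (j : ℝ) < j' := by exact_mod_cast h2
    have h3R : (j' : ℝ) ≤ n := by exact_mod_cast h3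
    have ha : (0 : ℝ) ≤ ((n : ℝ) - j' + 1 / 2) * l := by
      apply mul_nonneg _ hl.le; linarith
    have hb : ((n : ℝ) - j' + 1 / 2) * l < ((n : ℝ) - j + 1 / 2) * l := by
      apply mul_lt_mul_of_pos_right _ hl; linarith
    exact cosh_lt_cosh_of_nonneg ha hb
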